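/- Let I be an interval and f, g : I → ℝ be continuous strictly monotone functions with g increasing. Then the quasi-arithmetic mean generated by f is pointwise less than or equal to that generated by g (for all finite vectors of arguments) if and only if g ∘ f⁻¹ is convex on f(I). -/

import Mathlib

open Filter Set

/-- `m` is the value of the quasi-arithmetic mean `A^[f]` on the tuple `v` from `I`,
i.e. `m ∈ I` and `f m = (f v₁ + ⋯ + f vₙ)/n`. -/
def IsQAM (I : Set ℝ) (f : ℝ → ℝ) {n : ℕ} (v : Fin n → ℝ) (m : ℝ) : Prop :=
  m ∈ I ∧ f m = (∑ i, f (v i)) / n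

/-- `A^[f] ≤ A^[g]` pointwise on all (nonempty) finite tuples from `I` (the relation `f ≺ g`). -/
def QALE (I : Set ℝ) (f g : ℝ → ℝ) : Prop :=
  ∀ (n : ℕ), 0 < n → ∀ (v : Fin n → ℝ), (∀ i, v i ∈ I) →
    ∀ a b : ℝ, IsQAM I f v a → IsQAM I g v b → a ≤ b

/-- `A^[f] = A^[g]` on all (nonempty) finite tuples from `I`. -/
def QAEQ (I : Set ℝ) (f g : ℝ → ℝ) : Prop :=
  ∀ (n : ℕ), 0 < n → ∀ (v : Fin n → ℝ), (∀ i, v i ∈ I) →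
    ∀ a b : ℝ, IsQAM I f v a → IsQAM I g v b → a = b

-- sum of an if-then-else over Fin n
private lemma sum_if_lt (n k : ℕ) (hk : k ≤ n) (c d : ℝ) :
    ∑ i : Fin n, (if (i : ℕ) < k then c else d) = k * c + ((n : ℝ) - k) * d := by
  rw [Fin.sum_univ_eq_sum_range (fun i => if i < k then c else d) n]
  rw [Finset.range_eq_Ico, ← Finset.sum_Ico_consecutive _ (Nat.zero_le k) hk]
  have h1 : ∑ i ∈ Finset.Ico 0 k, (if i < k then c else d) = k * c := by
    rw [Finset.sum_congr rfl fun i hi => if_pos (Finset.mem_Ico.mp hi).2]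
    simp [mul_comm]
  have h2 : ∑ i ∈ Finset.Ico k n, (if i < k then c else d) = ((n : ℝ) - k) * d := by
    rw [Finset.sum_congr rfl fun i hi => if_neg (not_lt.mpr (Finset.mem_Ico.mp hi).1)]
    rw [Finset.sum_const, Nat.card_Ico, nsmul_eq_mul, Nat.cast_sub hk]
  rw [h1, h2]

private lemma ratConvex_real {s : Set ℝ} (h : ℝ → ℝ)
    (hrat : ∀ x ∈ s, ∀ y ∈ s, ∀ k n : ℕ, k ≤ n → 0 < n →
      h ((k * x + ((n : ℝ) - k) * y) / n) ≤ (k * h x + ((n : ℝ) - k) * h y) / n)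
    {x y : ℝ} (hx : x ∈ s) (hy : y ∈ s) (r : ℚ) (hr0 : 0 ≤ r) (hr1 : r ≤ 1) :
    h ((r : ℝ) * x + (1 - (r : ℝ)) * y) ≤ (r : ℝ) * h x + (1 - (r : ℝ)) * h y := by
  set k : ℕ := r.num.toNat with hkdef
  set n : ℕ := r.den with hndef
  have hnum : (0 : ℤ) ≤ r.num := Rat.num_nonneg.mpr hr0
  have hkr : ((k : ℤ) : ℝ) = (r : ℝ) * n := by
    rw [Int.toNat_of_nonneg hnum]
    rw [Rat.cast_def]
    have hd : ((r.den : ℝ)) ≠ 0 := Nat.cast_ne_zero.mpr r.den_nz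
    field_simp
    rfl
  have hn0 : 0 < n := r.pos
  have hne : ((n : ℝ)) ≠ 0 := Nat.cast_ne_zero.mpr hn0.ne'
  have hkR : (k : ℝ) = (r : ℝ) * n := by exact_mod_cast hkr
  have hkn : k ≤ n := by
    have h1 : (k : ℝ) ≤ (n : ℝ) := by
      rw [hkR]
      have hr1R : (r : ℝ) ≤ 1 := by exact_mod_cast hr1
      nlinarith [Nat.cast_nonneg (α := ℝ) n]
    exact_mod_cast h1
  have e1 : ((k : ℝ) * x + ((n : ℝ) - k) * y) / n = (r : ℝ) * x + (1 - (r : ℝ)) * y := by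
    rw [hkR]; field_simp
  have e2 : ((k : ℝ) * h x + ((n : ℝ) - k) * h y) / n
      = (r : ℝ) * h x + (1 - (r : ℝ)) * h y := by
    rw [hkR]; field_simp
  have := hrat x hx y hy k n hkn hn0
  rw [e1, e2] at this
  exact this

private lemma convexOn_of_ratConvex {s : Set ℝ} (hs : Convex ℝ s) (h : ℝ → ℝ)
    (hmono : MonotoneOn h s ∨ AntitoneOn h s)
    (hr : ∀ x ∈ s, ∀ y ∈ s, ∀ r : ℚ, 0 ≤ r → r ≤ 1 →
      h ((r : ℝ) * x + (1 - (r : ℝ)) * y) ≤ (r : ℝ) * h x + (1 - (r : ℝ)) * h y) :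
    ConvexOn ℝ s h := by
  suffices key : ∀ x ∈ s, ∀ y ∈ s, x ≤ y → ∀ t : ℝ, 0 ≤ t → t ≤ 1 →
      h (t * x + (1 - t) * y) ≤ t * h x + (1 - t) * h y by
    refine ⟨hs, fun x hx y hy a b ha hb hab => ?_⟩
    simp only [smul_eq_mul]
    rcases le_total x y with hxy | hxy
    · have := key x hx y hy hxy a ha (by linarith)
      have hb' : b = 1 - a := by linarith
      rw [hb']; exact this
    · have := key y hy x hx hxy b hb (by linarith)
      have ha' : a = 1 - b := by linarith
      rw [ha']
      calc h ((1 - b) * x + b * y) = h (b * y + (1 - b) * x) := by ring_nf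
        _ ≤ b * h y + (1 - b) * h x := this
        _ = (1 - b) * h x + b * h y := by ring
  intro x hx y hy hxy t ht0 ht1
  have hmem : ∀ u : ℝ, 0 ≤ u → u ≤ 1 → u * x + (1 - u) * y ∈ s := by
    intro u hu0 hu1
    have := hs hx hy hu0 (by linarith : (0:ℝ) ≤ 1 - u) (by ring)
    simpa [smul_eq_mul] using this
  have hc : t * x + (1 - t) * y ∈ s := hmem t ht0 ht1
  rcases hmono with hm | hm
  · -- monotone case: h x ≤ h y; approximate t from below by rationals
    have hhxy : h x ≤ h y := hm hx hy hxy
    refine le_of_forall_pos_le_add fun ε hε => ?_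
    rcases eq_or_lt_of_le ht0 with ht | ht
    · -- t = 0
      have : t * x + (1 - t) * y = y := by rw [← ht]; ring
      rw [this, ← ht]; linarith
    · set δ : ℝ := ε / (h y - h x + 1) with hδdef
      have hδ0 : 0 < δ := div_pos hε (by linarith)
      have hlt : max 0 (t - δ) < t := max_lt ht (by linarith)
      obtain ⟨r, hr1', hr2'⟩ := exists_rat_btwn hlt
      have hr0R : (0 : ℝ) ≤ (r : ℝ) := le_of_lt (lt_of_le_of_lt (le_max_left _ _) hr1')
      have hr1R : (r : ℝ) ≤ 1 := le_of_lt (lt_of_lt_of_le hr2' ht1)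
      have hrt : t - (r : ℝ) < δ :=
        by have := le_max_right 0 (t - δ); linarith [lt_of_le_of_lt this hr1']
      have hφ : t * x + (1 - t) * y ≤ (r : ℝ) * x + (1 - (r : ℝ)) * y := by
        nlinarith [mul_nonneg (sub_nonneg.2 hr2'.le) (sub_nonneg.2 hxy)]
      have h1 : h (t * x + (1 - t) * y) ≤ h ((r : ℝ) * x + (1 - (r : ℝ)) * y) :=
        hm hc (hmem _ hr0R hr1R) hφ
      have h2 := hr x hx y hy r (by exact_mod_cast hr0R) (by exact_mod_cast hr1R)
      have e2 : δ * (h y - h x + 1) = ε := by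
        rw [hδdef, div_mul_cancel₀]; linarith
      have e3 : (r : ℝ) * h x + (1 - (r : ℝ)) * h y
          = t * h x + (1 - t) * h y + (t - (r : ℝ)) * (h y - h x) := by ring
      have e4 : (t - (r : ℝ)) * (h y - h x) ≤ δ * (h y - h x) :=
        mul_le_mul_of_nonneg_right hrt.le (by linarith)
      linarith
  · -- antitone case: h y ≤ h x; approximate t from above
    have hhxy : h y ≤ h x := hm hx hy hxy
    refine le_of_forall_pos_le_add fun ε hε => ?_
    rcases eq_or_lt_of_le ht1 with ht | ht
    · have : t * x + (1 - t) * y = x := by rw [ht]; ring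
      rw [this, ht]; linarith
    · set δ : ℝ := ε / (h x - h y + 1) with hδdef
      have hδ0 : 0 < δ := div_pos hε (by linarith)
      have hlt : t < min 1 (t + δ) := lt_min ht (by linarith)
      obtain ⟨r, hr1', hr2'⟩ := exists_rat_btwn hlt
      have hr0R : (0 : ℝ) ≤ (r : ℝ) := le_of_lt (lt_of_le_of_lt ht0 hr1')
      have hr1R : (r : ℝ) ≤ 1 := le_of_lt (lt_of_lt_of_le hr2' (min_le_left _ _))
      have hrt : (r : ℝ) - t < δ :=
        by have := min_le_right 1 (t + δ); linarith [lt_of_lt_of_le hr2' this]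
      have hφ : (r : ℝ) * x + (1 - (r : ℝ)) * y ≤ t * x + (1 - t) * y := by
        nlinarith [mul_nonneg (sub_nonneg.2 hr1'.le) (sub_nonneg.2 hxy)]
      have h1 : h (t * x + (1 - t) * y) ≤ h ((r : ℝ) * x + (1 - (r : ℝ)) * y) :=
        hm (hmem _ hr0R hr1R) hc hφ
      have h2 := hr x hx y hy r (by exact_mod_cast hr0R) (by exact_mod_cast hr1R)
      have e2 : δ * (h x - h y + 1) = ε := by
        rw [hδdef, div_mul_cancel₀]; linarith
      have e3 : (r : ℝ) * h x + (1 - (r : ℝ)) * h y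
          = t * h x + (1 - t) * h y + ((r : ℝ) - t) * (h x - h y) := by ring
      have e4 : ((r : ℝ) - t) * (h x - h y) ≤ δ * (h x - h y) :=
        mul_le_mul_of_nonneg_right hrt.le (by linarith)
      linarith

/-- for continuous strictly monotone `f, g` on an interval `I` with `g`
increasing, `f ≺ g` iff `g ∘ f⁻¹` is convex on `f(I)`. -/
theorem qale_iff_convexOn_comp_invFunOn
    (I : Set ℝ) (hI : I.OrdConnected)
    (f g : ℝ → ℝ)
    (hfc : ContinuousOn f I) (hgc : ContinuousOn g I)
    (hf : StrictMonoOn f I ∨ StrictAntiOn f I)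
    (hg : StrictMonoOn g I) :
    QALE I f g ↔ ConvexOn ℝ (f '' I) (g ∘ Function.invFunOn f I) := by
  have hinj : Set.InjOn f I := hf.elim (fun h => h.injOn) (fun h => h.injOn)
  have hinv : ∀ a ∈ I, Function.invFunOn f I (f a) = a := fun a ha =>
    hinj (Function.invFunOn_apply_mem ha) ha (Function.invFunOn_apply_eq ha)
  have hJconv : Convex ℝ (f '' I) := by
    rw [convex_iff_ordConnected]
    exact (hI.isPreconnected.image f hfc).ordConnected
  have hGconv : Convex ℝ (g '' I) := by
    rw [convex_iff_ordConnected]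
    exact (hI.isPreconnected.image g hgc).ordConnected
  constructor
  · intro hq
    refine convexOn_of_ratConvex hJconv _ ?_ fun p hp q hq' r hr0 hr1 =>
      ratConvex_real _ ?_ hp hq' r hr0 hr1
    · -- monotone or antitone
      rcases hf with hf | hf
      · left
        rintro u ⟨xu, hxu, rfl⟩ v ⟨xv, hxv, rfl⟩ huv
        simp only [Function.comp_apply, hinv _ hxu, hinv _ hxv]
        exact hg.monotoneOn hxu hxv ((hf.le_iff_le hxu hxv).mp huv)
      · right
        rintro u ⟨xu, hxu, rfl⟩ v ⟨xv, hxv, rfl⟩ huv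
        simp only [Function.comp_apply, hinv _ hxu, hinv _ hxv]
        exact hg.monotoneOn hxv hxu ((hf.le_iff_ge hxu hxv).mp huv)
    · -- rational convexity from QALE
      rintro p ⟨x, hx, rfl⟩ q ⟨y, hy, rfl⟩ k n hk hn
      have hne : ((n : ℝ)) ≠ 0 := Nat.cast_ne_zero.mpr hn.ne'
      have hkn : (k : ℝ) ≤ (n : ℝ) := Nat.cast_le.mpr hk
      have hk0 : (0 : ℝ) ≤ (k : ℝ) := Nat.cast_nonneg k
      have hn0 : (0 : ℝ) < (n : ℝ) := by exact_mod_cast hn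
      set v : Fin n → ℝ := fun i => if (i : ℕ) < k then x else y with hvdef
      have hvI : ∀ i, v i ∈ I := fun i => by
        simp only [hvdef]; split_ifs <;> assumption
      have hsumf : ∑ i, f (v i) = k * f x + ((n : ℝ) - k) * f y := by
        rw [Finset.sum_congr rfl fun i _ =>
          show f (v i) = if (i : ℕ) < k then f x else f y by
            simp only [hvdef]; split_ifs <;> rfl]
        exact sum_if_lt n k hk (f x) (f y)
      have hsumg : ∑ i, g (v i) = k * g x + ((n : ℝ) - k) * g y := by
        rw [Finset.sum_congr rfl fun i _ =>
          show g (v i) = if (i : ℕ) < k then g x else g y by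
            simp only [hvdef]; split_ifs <;> rfl]
        exact sum_if_lt n k hk (g x) (g y)
      have hcomb : ∀ (φ : ℝ → ℝ) (hφ : Convex ℝ (φ '' I)),
          ((k : ℝ) * φ x + ((n : ℝ) - k) * φ y) / n ∈ φ '' I := by
        intro φ hφ
        have e : ((k : ℝ) * φ x + ((n : ℝ) - k) * φ y) / n
            = ((k : ℝ) / n) • φ x + (((n : ℝ) - k) / n) • φ y := by
          simp only [smul_eq_mul]; field_simp
        rw [e]
        exact hφ (mem_image_of_mem φ hx) (mem_image_of_mem φ hy)
          (div_nonneg hk0 hn0.le) (div_nonneg (by linarith) hn0.le)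
          (by field_simp; ring)
      obtain ⟨a, haI, hfa⟩ := hcomb f hJconv
      obtain ⟨b, hbI, hgb⟩ := hcomb g hGconv
      have hab : a ≤ b := hq n hn v hvI a b ⟨haI, by rw [hsumf]; exact hfa⟩
        ⟨hbI, by rw [hsumg]; exact hgb⟩
      calc (g ∘ Function.invFunOn f I) (((k : ℝ) * f x + ((n : ℝ) - k) * f y) / n)
          = g a := by rw [← hfa, Function.comp_apply, hinv a haI]
        _ ≤ g b := hg.monotoneOn haI hbI hab
        _ = ((k : ℝ) * g x + ((n : ℝ) - k) * g y) / n := hgb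
        _ = ((k : ℝ) * (g ∘ Function.invFunOn f I) (f x)
            + ((n : ℝ) - k) * (g ∘ Function.invFunOn f I) (f y)) / n := by
          simp only [Function.comp_apply, hinv x hx, hinv y hy]
  · intro hcv n hn v hv a b ⟨haI, hfa⟩ ⟨hbI, hgb⟩
    have hne : ((n : ℝ)) ≠ 0 := Nat.cast_ne_zero.mpr hn.ne'
    have hjensen := hcv.map_sum_le (t := Finset.univ) (w := fun _ : Fin n => (n : ℝ)⁻¹)
      (p := fun i => f (v i)) (fun i _ => by positivity)
      (by simp only [Finset.sum_const, Finset.card_univ, Fintype.card_fin, nsmul_eq_mul]; field_simp) (fun i _ => mem_image_of_mem f (hv i))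
    have e1 : ∑ i : Fin n, (n : ℝ)⁻¹ • f (v i) = (∑ i, f (v i)) / n := by
      simp only [smul_eq_mul, ← Finset.mul_sum]
      rw [div_eq_inv_mul]
    have e2 : ∑ i : Fin n, (n : ℝ)⁻¹ • (g ∘ Function.invFunOn f I) (f (v i))
        = (∑ i, g (v i)) / n := by
      rw [Finset.sum_congr rfl fun i _ => by
        rw [Function.comp_apply, hinv _ (hv i)]]
      simp only [smul_eq_mul, ← Finset.mul_sum]
      rw [div_eq_inv_mul]
    rw [e1, e2, ← hfa, Function.comp_apply, hinv a haI, ← hgb] at hjensen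
    exact (hg.le_iff_le haI hbI).mp hjensen
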